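/- Consider maximizing spectral efficiency over continuous-aperture beamformers. Let μ be the Lebesgue measure on ℝ³ restricted to a measurable transmit aperture 𝒜, and let H_1,…,H_K ∈ L²(μ,ℂ) be the users' channel responses. For V = (V_1,…,V_K) ∈ (L²(μ,ℂ))^K define SE(V) = ∑_{k=1}^K log₂(1 + A_k·|∫ H_k·V_k dμ|² / (∑_{j≠k} A_j·|∫ H_k·V_j dμ|² + σ_k²)) and P(V) = ∑_{k=1}^K ‖V_k‖²_{L²}, where A_k > 0 and σ_k > 0. Suppose V* is feasible (P(V*) = P_max with P_max > 0), maximizes SE among all feasible tuples, and there exists j with ∫ H_j·V*_j dμ ≠ 0. Then for every k, V*_k lies in the ℂ-linear span (inside L²(μ,ℂ)) of the conjugate channel responses conj(H_1),…,conj(H_K); equivalently, there exist scalars b_{1k},…,b_{Kk} ∈ ℂ with V*_k = ∑_{j=1}^K b_{jk}·conj(H_j) in L²(μ,ℂ). -/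

import Mathlib

open MeasureTheory Complex
set_option maxHeartbeats 1000000

section Aux
variable {α : Type*} [MeasurableSpace α] {μ : Measure α}

private lemma memLp_conj' {f : α → ℂ} (hf : MemLp f 2 μ) :
    MemLp (fun x => (starRingEnd ℂ) (f x)) 2 μ := by
  refine ⟨Complex.continuous_conj.comp_aestronglyMeasurable hf.aestronglyMeasurable, ?_⟩
  have he : eLpNorm (fun x => (starRingEnd ℂ) (f x)) 2 μ = eLpNorm f 2 μ :=
    eLpNorm_congr_norm_ae (Filter.Eventually.of_forall fun x => by simp)
  rw [he]; exact hf.2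

private lemma integral_eq_inner' {f g : α → ℂ} (hf : MemLp f 2 μ) (hg : MemLp g 2 μ) :
    ∫ x, f x * g x ∂μ = @inner ℂ _ _ ((memLp_conj' hf).toLp _) (hg.toLp g) := by
  rw [L2.inner_def]
  refine (integral_congr_ae ?_).symm
  filter_upwards [(memLp_conj' hf).coeFn_toLp, hg.coeFn_toLp] with x h1 h2
  simp [h1, h2, RCLike.inner_apply, mul_comm]

private lemma integral_normsq_eq' {f : α → ℂ} (hf : MemLp f 2 μ) :
    ∫ x, ‖f x‖ ^ 2 ∂μ = ‖hf.toLp f‖ ^ 2 := by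
  have h := @inner_self_eq_norm_sq ℂ _ _ _ _ (hf.toLp f)
  rw [← h, L2.inner_def]
  have h2 : ∫ a, (inner ℂ (hf.toLp f a) (hf.toLp f a) : ℂ) ∂μ
      = ∫ a, (@RCLike.ofReal ℂ _ (‖f a‖ ^ 2)) ∂μ := by
    refine integral_congr_ae ?_
    filter_upwards [hf.coeFn_toLp] with x h1
    simp only [h1, RCLike.inner_apply, RCLike.ofReal_pow]
    exact RCLike.mul_conj (f x)
  have h3 : ∫ a, (@RCLike.ofReal ℂ _ (‖f a‖ ^ 2)) ∂μ
      = @RCLike.ofReal ℂ _ (∫ a, ‖f a‖ ^ 2 ∂μ) := integral_ofReal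
  rw [h2, h3]
  exact (RCLike.ofReal_re _).symm

private lemma coeFn_finset_sum_smul' {ι : Type*} (s : Finset ι) (b : ι → ℂ)
    (g : ι → Lp ℂ 2 μ) :
    ⇑(∑ j ∈ s, b j • g j) =ᵐ[μ] fun r => ∑ j ∈ s, b j * g j r := by
  classical
  induction s using Finset.induction_on with
  | empty => simp only [Finset.sum_empty]; exact Lp.coeFn_zero _ _ _
  | insert a s' hj ih =>
    rw [Finset.sum_insert hj]
    filter_upwards [Lp.coeFn_add (b a • g a) (∑ j ∈ s', b j • g j),
      Lp.coeFn_smul (b a) (g a), ih] with r h1 h2 h3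
    simp only [h1, Pi.add_apply, h2, Pi.smul_apply, smul_eq_mul, h3,
      Finset.sum_insert hj]

private lemma pyth_proj {E : Type*} [NormedAddCommGroup E] [InnerProductSpace ℂ E]
    (S : Submodule ℂ E) [CompleteSpace S] (x : E) :
    ‖x‖ ^ 2 = ‖(S.orthogonalProjectionOnto x : E)‖ ^ 2 + ‖x - S.orthogonalProjectionOnto x‖ ^ 2 := by
  have h0 : (inner ℂ ((S.orthogonalProjectionOnto x : E)) (x - S.orthogonalProjectionOnto x) : ℂ) = 0 :=
    Submodule.inner_right_of_mem_orthogonal (S.orthogonalProjectionOnto x).2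
      (Submodule.sub_starProjection_mem_orthogonal x)
  have h := @norm_add_sq ℂ _ _ _ _ (S.orthogonalProjectionOnto x : E)
    (x - S.orthogonalProjectionOnto x)
  rw [add_sub_cancel] at h
  rw [h, h0]
  simp

private lemma ratio_le' {s i σ2 τ : ℝ} (hs : 0 ≤ s) (hi : 0 ≤ i) (hσ : 0 < σ2) (hτ : 1 ≤ τ) :
    s / (i + σ2) ≤ τ * s / (τ * i + σ2) := by
  rw [div_le_div_iff₀ (by linarith) (by nlinarith)]
  nlinarith [mul_nonneg (mul_nonneg (sub_nonneg.mpr hτ) hs) hσ.le]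

private lemma ratio_lt' {s i σ2 τ : ℝ} (hs : 0 < s) (hi : 0 ≤ i) (hσ : 0 < σ2) (hτ : 1 < τ) :
    s / (i + σ2) < τ * s / (τ * i + σ2) := by
  rw [div_lt_div_iff₀ (by linarith) (by nlinarith)]
  nlinarith [mul_pos (mul_pos hs hσ) (sub_pos.mpr hτ)]

end Aux

/-- **Proposition 1.** An SE-maximizing feasible beamformer tuple lies in the
subspace spanned by the conjugate channel responses. -/
theorem optimal_beamforming_in_conjugate_channel_span
    {K : ℕ} (hK : 1 ≤ K)
    (𝒜 : Set (Fin 3 → ℝ)) (h𝒜 : MeasurableSet 𝒜)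
    (μ : Measure (Fin 3 → ℝ)) (hμ : μ = volume.restrict 𝒜)
    (H : Fin K → (Fin 3 → ℝ) → ℂ) (hH : ∀ k, MemLp (H k) 2 μ)
    (A σ : Fin K → ℝ) (hA : ∀ k, 0 < A k) (hσ : ∀ k, 0 < σ k)
    (Pmax : ℝ) (hPmax : 0 < Pmax)
    (SE P : (Fin K → (Fin 3 → ℝ) → ℂ) → ℝ)
    (hSE : ∀ V, SE V = ∑ k, Real.logb 2
      (1 + A k * ‖∫ r, H k r * V k r ∂μ‖ ^ 2 /
        ((∑ j ∈ Finset.univ.erase k, A j * ‖∫ r, H k r * V j r ∂μ‖ ^ 2) + σ k ^ 2)))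
    (hP : ∀ V, P V = ∑ k, ∫ r, ‖V k r‖ ^ 2 ∂μ)
    (Vstar : Fin K → (Fin 3 → ℝ) → ℂ) (hVstar : ∀ k, MemLp (Vstar k) 2 μ)
    (hfeas : P Vstar = Pmax)
    (hopt : ∀ V : Fin K → (Fin 3 → ℝ) → ℂ,
      (∀ k, MemLp (V k) 2 μ) → P V = Pmax → SE V ≤ SE Vstar)
    (hsig : ∃ j, (∫ r, H j r * Vstar j r ∂μ) ≠ 0) :
    ∀ k, ∃ b : Fin K → ℂ,
      Vstar k =ᵐ[μ] fun r => ∑ j, b j * (starRingEnd ℂ) (H j r) := by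
  classical
  -- Lp elements
  set hc : Fin K → Lp ℂ 2 μ := fun k => (memLp_conj' (hH k)).toLp _ with hhc
  set v : Fin K → Lp ℂ 2 μ := fun k => (hVstar k).toLp _ with hv
  set S : Submodule ℂ (Lp ℂ 2 μ) := Submodule.span ℂ (Set.range hc) with hS
  haveI : FiniteDimensional ℂ S := FiniteDimensional.span_of_finite ℂ (Set.finite_range hc)
  haveI : CompleteSpace S := FiniteDimensional.complete ℂ S
  set p : Fin K → Lp ℂ 2 μ := fun k => (S.orthogonalProjectionOnto (v k) : Lp ℂ 2 μ) with hp
  have hcS : ∀ k, hc k ∈ S := fun k => Submodule.subset_span (Set.mem_range_self k)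
  -- inner products preserved by projection
  have hinner : ∀ k j, (inner ℂ (hc k) (p j) : ℂ) = inner ℂ (hc k) (v j) := by
    intro k j
    have h0 : (inner ℂ (hc k) (v j - p j) : ℂ) = 0 :=
      Submodule.inner_right_of_mem_orthogonal (hcS k)
        (Submodule.sub_starProjection_mem_orthogonal (v j))
    rw [inner_sub_right, sub_eq_zero] at h0
    exact h0.symm
  -- integrals as inner products
  have hci : ∀ k j, (∫ r, H k r * Vstar j r ∂μ) = inner ℂ (hc k) (v j) :=
    fun k j => integral_eq_inner' (hH k) (hVstar j)
  -- the main claim : every v k equals its projection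
  have hmem : ∀ k, v k = p k := by
    by_contra hne
    push_neg at hne
    obtain ⟨k0, hk0⟩ := hne
    obtain ⟨j0, hj0⟩ := hsig
    -- basic quantities
    have hPv : ∑ k, ‖v k‖ ^ 2 = Pmax := by
      rw [← hfeas, hP]
      exact Finset.sum_congr rfl fun k _ => (integral_normsq_eq' (hVstar k)).symm
    have hple : ∀ k, ‖p k‖ ^ 2 ≤ ‖v k‖ ^ 2 := by
      intro k
      have := pyth_proj S (v k)
      nlinarith [sq_nonneg ‖v k - p k‖]
    have hplt : ‖p k0‖ ^ 2 < ‖v k0‖ ^ 2 := by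
      have h1 := pyth_proj S (v k0)
      have h2 : v k0 - p k0 ≠ 0 := sub_ne_zero.mpr hk0
      have h3 : 0 < ‖v k0 - p k0‖ := norm_pos_iff.mpr h2
      nlinarith
    set Q : ℝ := ∑ k, ‖p k‖ ^ 2 with hQ
    have hpj0 : p j0 ≠ 0 := by
      intro h0
      apply hj0
      rw [hci, ← hinner, h0, inner_zero_right]
    have hQpos : 0 < Q := by
      refine Finset.sum_pos' (fun k _ => by positivity) ⟨j0, Finset.mem_univ _, ?_⟩
      have := norm_pos_iff.mpr hpj0
      positivity
    have hQlt : Q < Pmax := by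
      rw [← hPv]
      exact Finset.sum_lt_sum (fun k _ => hple k) ⟨k0, Finset.mem_univ _, hplt⟩
    set τ : ℝ := Pmax / Q with hτdef
    have hτ1 : 1 < τ := (one_lt_div hQpos).mpr hQlt
    set t : ℝ := Real.sqrt τ with htdef
    have ht0 : 0 < t := Real.sqrt_pos.mpr (by linarith)
    have ht2 : t ^ 2 = τ := Real.sq_sqrt (by linarith)
    -- competitor
    set q : Fin K → Lp ℂ 2 μ := fun k => (t : ℂ) • p k with hq
    set V' : Fin K → (Fin 3 → ℝ) → ℂ := fun k => ⇑(q k) with hV'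
    have hmemV' : ∀ k, MemLp (V' k) 2 μ := fun k => Lp.memLp (q k)
    -- power of competitor
    have hPV' : P V' = Pmax := by
      rw [hP]
      have h1 : ∀ k, ∫ r, ‖V' k r‖ ^ 2 ∂μ = τ * ‖p k‖ ^ 2 := by
        intro k
        rw [integral_normsq_eq' (hmemV' k), Lp.toLp_coeFn, hq]
        rw [norm_smul]
        simp only [Complex.norm_real, Real.norm_eq_abs, abs_of_pos ht0]
        rw [mul_pow, ht2]
      rw [Finset.sum_congr rfl fun k _ => h1 k, ← Finset.mul_sum]
      have : τ * Q = Pmax := by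
        rw [hτdef]; field_simp
      exact this
    -- integrals for competitor
    have hciV' : ∀ k j, (∫ r, H k r * V' j r ∂μ) = (t : ℂ) * ∫ r, H k r * Vstar j r ∂μ := by
      intro k j
      rw [integral_eq_inner' (hH k) (hmemV' j), Lp.toLp_coeFn, hq]
      rw [inner_smul_right, hci, hinner]
    have hnormV' : ∀ k j, ‖∫ r, H k r * V' j r ∂μ‖ ^ 2
        = τ * ‖∫ r, H k r * Vstar j r ∂μ‖ ^ 2 := by
      intro k j
      rw [hciV', norm_mul, Complex.norm_real, Real.norm_eq_abs, abs_of_pos ht0,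
        mul_pow, ht2]
    -- SE comparison
    have hSElt : SE Vstar < SE V' := by
      rw [hSE, hSE]
      refine Finset.sum_lt_sum (fun k _ => ?_) ⟨j0, Finset.mem_univ _, ?_⟩
      · set s := A k * ‖∫ r, H k r * Vstar k r ∂μ‖ ^ 2 with hs
        set i := ∑ j ∈ Finset.univ.erase k, A j * ‖∫ r, H k r * Vstar j r ∂μ‖ ^ 2 with hi
        have hs0 : 0 ≤ s := by
          rw [hs]
          exact mul_nonneg (hA k).le (by positivity)
        have hi0 : 0 ≤ i := by
          rw [hi]
          exact Finset.sum_nonneg fun j _ => mul_nonneg (hA j).le (by positivity)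
        have hσ2 : 0 < σ k ^ 2 := pow_pos (hσ k) 2
        have hnum : A k * ‖∫ r, H k r * V' k r ∂μ‖ ^ 2 = τ * s := by
          rw [hnormV']; ring
        have hden : ∑ j ∈ Finset.univ.erase k, A j * ‖∫ r, H k r * V' j r ∂μ‖ ^ 2
            = τ * i := by
          rw [hi, Finset.mul_sum]
          exact Finset.sum_congr rfl fun j _ => by rw [hnormV']; ring
        rw [hnum, hden]
        have hterm : s / (i + σ k ^ 2) ≤ τ * s / (τ * i + σ k ^ 2) :=
          ratio_le' hs0 hi0 hσ2 (le_of_lt hτ1)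
        have hd0 : 0 ≤ s / (i + σ k ^ 2) := div_nonneg hs0 (by linarith)
        have hd1 : 0 < 1 + s / (i + σ k ^ 2) := by linarith
        exact Real.logb_le_logb_of_le one_lt_two hd1 (by linarith)
      · set s := A j0 * ‖∫ r, H j0 r * Vstar j0 r ∂μ‖ ^ 2 with hs
        set i := ∑ j ∈ Finset.univ.erase j0, A j * ‖∫ r, H j0 r * Vstar j r ∂μ‖ ^ 2 with hi
        have hs0 : 0 < s := by
          rw [hs]
          exact mul_pos (hA j0) (pow_pos (norm_pos_iff.mpr hj0) 2)
        have hi0 : 0 ≤ i := by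
          rw [hi]
          exact Finset.sum_nonneg fun j _ => mul_nonneg (hA j).le (by positivity)
        have hσ2 : 0 < σ j0 ^ 2 := pow_pos (hσ j0) 2
        have hnum : A j0 * ‖∫ r, H j0 r * V' j0 r ∂μ‖ ^ 2 = τ * s := by
          rw [hnormV']; ring
        have hden : ∑ j ∈ Finset.univ.erase j0, A j * ‖∫ r, H j0 r * V' j r ∂μ‖ ^ 2
            = τ * i := by
          rw [hi, Finset.mul_sum]
          exact Finset.sum_congr rfl fun j _ => by rw [hnormV']; ring
        rw [hnum, hden]
        have hterm : s / (i + σ j0 ^ 2) < τ * s / (τ * i + σ j0 ^ 2) :=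
          ratio_lt' hs0 hi0 hσ2 hτ1
        have hd0 : 0 ≤ s / (i + σ j0 ^ 2) := div_nonneg hs0.le (by linarith)
        have hd1 : 0 < 1 + s / (i + σ j0 ^ 2) := by linarith
        exact Real.logb_lt_logb one_lt_two hd1 (by linarith)
    exact absurd (hopt V' hmemV' hPV') (not_le.mpr hSElt)
  -- conclusion: each v k lies in the span
  intro k
  have hvk : v k ∈ S := by
    rw [hmem k]
    exact (S.orthogonalProjectionOnto (v k)).2
  rw [hS] at hvk
  obtain ⟨b, hb⟩ := (Submodule.mem_span_range_iff_exists_fun ℂ).mp hvk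
  refine ⟨b, ?_⟩
  have h1 : Vstar k =ᵐ[μ] ⇑(v k) := ((hVstar k).coeFn_toLp).symm
  have h2 : ⇑(v k) =ᵐ[μ] fun r => ∑ j, b j * hc j r := by
    rw [← hb]
    exact coeFn_finset_sum_smul' Finset.univ b hc
  have h3 : ∀ᵐ r ∂μ, ∀ j, hc j r = (starRingEnd ℂ) (H j r) :=
    MeasureTheory.ae_all_iff.mpr fun j => (memLp_conj' (hH j)).coeFn_toLp
  filter_upwards [h1, h2, h3] with r e1 e2 e3
  rw [e1, e2]
  exact Finset.sum_congr rfl fun j _ => by rw [e3 j]
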